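/- Green's identity for the radial factors on an elliptic membrane: let c, λ, λ', R, R', ϑ be real numbers with ϑ > 0, and let Q, Q̃ : ℝ → ℝ be twice continuously differentiable functions satisfying Q''(β) − (R − 2λ²c²·cosh 2β)·Q(β) = 0 and Q̃''(β) − (R' − 2λ'²c²·cosh 2β)·Q̃(β) = 0 for all β ∈ [0, ϑ], with Q(ϑ) = Q̃(ϑ) = 0, and such that either Q(0) = Q̃(0) = 0 or Q'(0) = Q̃'(0) = 0. Then (R − R')·∫₀^{ϑ} Q(β)·Q̃(β) dβ = 2(λ² − λ'²)·c²·∫₀^{ϑ} Q(β)·Q̃(β)·cosh 2β dβ. -/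

import Mathlib

open Real

/-- Green's identity for the radial factors on an elliptic membrane. -/
theorem modified_mathieu_green_identity
    (c lam lam' R R' ϑ : ℝ) (hϑ : 0 < ϑ) (Q Qt : ℝ → ℝ)
    (hQ : ContDiff ℝ 2 Q) (hQt : ContDiff ℝ 2 Qt)
    (hQode : ∀ β ∈ Set.Icc (0 : ℝ) ϑ,
      deriv (deriv Q) β - (R - 2 * lam ^ 2 * c ^ 2 * Real.cosh (2 * β)) * Q β = 0)
    (hQtode : ∀ β ∈ Set.Icc (0 : ℝ) ϑ,
      deriv (deriv Qt) β - (R' - 2 * lam' ^ 2 * c ^ 2 * Real.cosh (2 * β)) * Qt β = 0)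
    (hQϑ : Q ϑ = 0) (hQtϑ : Qt ϑ = 0)
    (hbc : (Q 0 = 0 ∧ Qt 0 = 0) ∨ (deriv Q 0 = 0 ∧ deriv Qt 0 = 0)) :
    (R - R') * ∫ β in (0 : ℝ)..ϑ, Q β * Qt β =
      2 * (lam ^ 2 - lam' ^ 2) * c ^ 2 *
        ∫ β in (0 : ℝ)..ϑ, Q β * Qt β * Real.cosh (2 * β) := by
  have hQ1 : ContDiff ℝ 1 (deriv Q) := (contDiff_succ_iff_deriv.mp (show ContDiff ℝ ((1:WithTop ℕ∞)+1) Q from by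
    have h11 : ((1:WithTop ℕ∞)+1) = 2 := by rfl
    rw [h11]; exact hQ)).2.2
  have hQt1 : ContDiff ℝ 1 (deriv Qt) := (contDiff_succ_iff_deriv.mp (show ContDiff ℝ ((1:WithTop ℕ∞)+1) Qt from by
    have h11 : ((1:WithTop ℕ∞)+1) = 2 := by rfl
    rw [h11]; exact hQt)).2.2
  have hQd : Differentiable ℝ Q := hQ.differentiable (by norm_num)
  have hQtd : Differentiable ℝ Qt := hQt.differentiable (by norm_num)
  have hQd' : Differentiable ℝ (deriv Q) := hQ1.differentiable (by norm_num)
  have hQtd' : Differentiable ℝ (deriv Qt) := hQt1.differentiable (by norm_num)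
  set W : ℝ → ℝ := fun β => deriv Q β * Qt β - Q β * deriv Qt β with hW
  have key : ∀ β ∈ Set.uIcc (0:ℝ) ϑ,
      HasDerivAt W ((R - R') * (Q β * Qt β)
        - 2 * (lam ^ 2 - lam' ^ 2) * c ^ 2 * (Q β * Qt β * Real.cosh (2 * β))) β := by
    intro β hβ
    rw [Set.uIcc_of_le hϑ.le] at hβ
    have h1 : HasDerivAt W (deriv (deriv Q) β * Qt β - Q β * deriv (deriv Qt) β) β := by
      have := (((hQd'.differentiableAt (x := β)).hasDerivAt.mul
          (hQtd.differentiableAt.hasDerivAt)).sub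
        ((hQd.differentiableAt.hasDerivAt).mul (hQtd'.differentiableAt.hasDerivAt)))
      exact this.congr_deriv (by ring)
    have e1 : deriv (deriv Q) β = (R - 2 * lam ^ 2 * c ^ 2 * Real.cosh (2 * β)) * Q β := by
      have := hQode β hβ; linarith
    have e2 : deriv (deriv Qt) β = (R' - 2 * lam' ^ 2 * c ^ 2 * Real.cosh (2 * β)) * Qt β := by
      have := hQtode β hβ; linarith
    rw [e1, e2] at h1
    convert h1 using 1
    ring
  have hint := intervalIntegral.integral_eq_sub_of_hasDerivAt key
    (by
      apply ContinuousOn.intervalIntegrable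
      apply Continuous.continuousOn
      exact (continuous_const.mul (hQd.continuous.mul hQtd.continuous)).sub
        (continuous_const.mul ((hQd.continuous.mul hQtd.continuous).mul
          (Real.continuous_cosh.comp (continuous_const.mul continuous_id)))))
  have hW0 : W 0 = 0 := by
    rcases hbc with ⟨h1, h2⟩ | ⟨h1, h2⟩ <;> simp [hW, h1, h2]
  have hWϑ : W ϑ = 0 := by simp [hW, hQϑ, hQtϑ]
  rw [hWϑ, hW0, sub_zero] at hint
  have hi1 : IntervalIntegrable (fun β => Q β * Qt β) MeasureTheory.volume 0 ϑ := by
    apply ContinuousOn.intervalIntegrable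
    exact ((hQd.continuous.mul hQtd.continuous)).continuousOn
  have hi2 : IntervalIntegrable (fun β => Q β * Qt β * Real.cosh (2 * β))
      MeasureTheory.volume 0 ϑ := by
    apply ContinuousOn.intervalIntegrable
    apply Continuous.continuousOn
    exact (hQd.continuous.mul hQtd.continuous).mul
      (Real.continuous_cosh.comp (continuous_const.mul continuous_id))
  rw [intervalIntegral.integral_sub (hi1.const_mul _) (hi2.const_mul _),
    intervalIntegral.integral_const_mul, intervalIntegral.integral_const_mul] at hint
  linarith
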